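/- arXiv:2508.12757 — 2 statements merged into one kernel-verified Lean document; each statement's English description precedes it below -/
import Mathlib

section
/- Products of independent imaginary complex octonions are never nonzero scalars: let x, y ∈ Im 𝕆^ℂ be imaginary complex octonions that are linearly independent over ℂ. If the product x*y lies in the scalar line ℂ • 1 ⊆ 𝕆^ℂ, then x*y = 0 (so span{x,y} is a null-plane). Equivalently, for linearly independent imaginary x, y, the linear form z ↦ Re((x*y)*z) vanishes identically on Im 𝕆^ℂ if and only if x*y = 0. -/
noncomputable section

/-- The Cayley–Dickson product on the complex octonions
`𝕆^ℂ = Quaternion ℂ × Quaternion ℂ`:  `(a,b)·(c,d) = (a c - d* b, b c* + d a)`. -/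
def octMul (x y : Quaternion ℂ × Quaternion ℂ) : Quaternion ℂ × Quaternion ℂ :=
  (x.1 * y.1 - star y.2 * x.2, x.2 * star y.1 + y.2 * x.1)

open scoped Quaternion

/-- Generic ring computation underlying the octonion argument. -/
lemma oct_ring_key {R : Type*} [Ring R] (a b u d b' d' e na nb : R)
    (ecomm : ∀ r : R, e * r = r * e)
    (nacomm : ∀ r : R, na * r = r * na)
    (nbcomm : ∀ r : R, nb * r = r * nb)
    (haa : a * a = -na) (hbb : b' * b = nb) (hb2 : b * b' = nb)
    (h1 : a * u - d' * b = e) (h1s : u * a - b' * d = e)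
    (h2' : d * a = b * u) (h2s : a * d' = u * b') :
    e * a + (na + nb) * u = 0 ∧ e * b + (na + nb) * d = 0 := by
  have keyA : a * e = -na * u - nb * u := by
    calc a * e = a * (a * u - d' * b) := by rw [h1]
    _ = (a * a) * u - (a * d') * b := by noncomm_ring
    _ = (-na) * u - (u * b') * b := by rw [haa, h2s]
    _ = -na * u - u * (b' * b) := by noncomm_ring
    _ = -na * u - u * nb := by rw [hbb]
    _ = -na * u - nb * u := by rw [← nbcomm u]
  have keyB : b * e = -na * d - nb * d := by
    calc b * e = b * (u * a - b' * d) := by rw [h1s]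
    _ = (b * u) * a - (b * b') * d := by noncomm_ring
    _ = (d * a) * a - nb * d := by rw [← h2', hb2]
    _ = d * (a * a) - nb * d := by noncomm_ring
    _ = d * (-na) - nb * d := by rw [haa]
    _ = -(d * na) - nb * d := by noncomm_ring
    _ = -(na * d) - nb * d := by rw [← nacomm d]
    _ = -na * d - nb * d := by noncomm_ring
  constructor
  · rw [ecomm a, keyA]; noncomm_ring
  · rw [ecomm b, keyB]; noncomm_ring

/-- Core step: if the product of independent imaginary octonions is the scalar `c`,
then it is `0`. -/
lemma oct_aux (x y : Quaternion ℂ × Quaternion ℂ)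
    (hxIm : x.1.re = 0) (hyIm : y.1.re = 0)
    (hind : LinearIndependent ℂ ![x, y]) (c : ℂ)
    (h : octMul x y = c • (((1 : Quaternion ℂ), (0 : Quaternion ℂ)))) :
    octMul x y = 0 := by
  set a := x.1 with ha
  set b := x.2 with hb
  set u := y.1 with hu
  set d := y.2 with hd
  have hsa : star a = -a := Quaternion.star_eq_neg.2 hxIm
  have hsu : star u = -u := Quaternion.star_eq_neg.2 hyIm
  have e_def : (c • (1 : Quaternion ℂ)) = ((c : Quaternion ℂ)) := by
    rw [← Quaternion.coe_mul_eq_smul, mul_one]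
  have h1 : a * u - star d * b = (c : Quaternion ℂ) := by
    have := congrArg Prod.fst h
    simpa [octMul, e_def] using this
  have h2 : b * star u + d * a = 0 := by
    have := congrArg Prod.snd h
    simpa [octMul] using this
  have h2' : d * a = b * u := by
    have h0 : -(b * u) + d * a = 0 := by rw [← mul_neg b u, ← hsu]; exact h2
    exact (neg_add_eq_zero.mp h0).symm
  have h2s : a * star d = u * star b := by
    have h0 := congrArg star h2'
    rw [star_mul, star_mul, hsa, hsu] at h0
    exact neg_injective ((neg_mul a (star d)).symm.trans (h0.trans (neg_mul u (star b))))
  have haa : a * a = -((Quaternion.normSq a : ℂ) : Quaternion ℂ) := by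
    have h0 := Quaternion.self_mul_star (a := a)
    rw [hsa] at h0
    exact neg_eq_iff_eq_neg.mp ((mul_neg a a).symm.trans h0)
  have hbb : star b * b = ((Quaternion.normSq b : ℂ) : Quaternion ℂ) :=
    Quaternion.star_mul_self b
  have hb2 : b * star b = ((Quaternion.normSq b : ℂ) : Quaternion ℂ) :=
    Quaternion.self_mul_star b
  have h1s : u * a - star b * d = (c : Quaternion ℂ) := by
    have h0 := congrArg star h1
    rw [star_sub (R := Quaternion ℂ), star_mul, star_mul, star_star, hsa, hsu, Quaternion.star_coe] at h0
    rw [← neg_mul_neg u a]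
    exact h0
  obtain ⟨hA, hB⟩ := oct_ring_key a b u d (star b) (star d) (c : Quaternion ℂ)
    ((Quaternion.normSq a : ℂ) : Quaternion ℂ) ((Quaternion.normSq b : ℂ) : Quaternion ℂ)
    (fun r => Quaternion.coe_commutes c r)
    (fun r => Quaternion.coe_commutes _ r)
    (fun r => Quaternion.coe_commutes _ r)
    haa hbb hb2 h1 h1s h2' h2s
  -- package as a linear relation `c • x + n • y = 0`
  set n : ℂ := Quaternion.normSq a + Quaternion.normSq b with hn
  have hA' : c • a + n • u = 0 := by
    rw [← Quaternion.coe_mul_eq_smul, ← Quaternion.coe_mul_eq_smul, Quaternion.coe_add]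
    exact hA
  have hB' : c • b + n • d = 0 := by
    rw [← Quaternion.coe_mul_eq_smul, ← Quaternion.coe_mul_eq_smul, Quaternion.coe_add]
    exact hB
  have hsum : c • x + n • y = 0 := by
    apply Prod.ext <;> simpa using (by assumption : _)
  have hc0 : c = 0 := (LinearIndependent.pair_iff.mp hind c n hsum).1
  rw [h, hc0]
  ext <;> simp

lemma quat_star_mk' (a b c d : ℂ) :
    (@star (Quaternion ℂ) _ ⟨a, b, c, d⟩).re = a ∧ (@star (Quaternion ℂ) _ ⟨a, b, c, d⟩).imI = -b ∧
    (@star (Quaternion ℂ) _ ⟨a, b, c, d⟩).imJ = -c ∧ (@star (Quaternion ℂ) _ ⟨a, b, c, d⟩).imK = -d :=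
  ⟨Quaternion.re_star _, Quaternion.imI_star _, Quaternion.imJ_star _, Quaternion.imK_star _⟩

lemma quat_re_mul_mk' (p : Quaternion ℂ) (a b c d : ℂ) :
    (@HMul.hMul (Quaternion ℂ) (Quaternion ℂ) (Quaternion ℂ) _ p ⟨a, b, c, d⟩).re
      = p.re * a - p.imI * b - p.imJ * c - p.imK * d :=
  Quaternion.re_mul _ _

/-- Products of linearly independent imaginary complex octonions are never nonzero
scalars: if `x * y` lies on the scalar line `ℂ • 1` then `x * y = 0`.  Equivalently, the
linear form `z ↦ Re ((x * y) * z)` vanishes identically on `Im 𝕆^ℂ` iff `x * y = 0`. -/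
theorem product_of_independent_imaginary_octonions
    (x y : Quaternion ℂ × Quaternion ℂ)
    (hxIm : x.1.re = 0) (hyIm : y.1.re = 0)
    (hind : LinearIndependent ℂ ![x, y]) :
    ((∃ c : ℂ, octMul x y = c • (((1 : Quaternion ℂ), (0 : Quaternion ℂ)))) →
      octMul x y = 0) ∧
    ((∀ z : Quaternion ℂ × Quaternion ℂ, z.1.re = 0 →
        (octMul (octMul x y) z).1.re = 0) ↔ octMul x y = 0) := by
  have part1 : (∃ c : ℂ, octMul x y = c • (((1 : Quaternion ℂ), (0 : Quaternion ℂ)))) →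
      octMul x y = 0 := by
    rintro ⟨c, hc⟩
    exact oct_aux x y hxIm hyIm hind c hc
  refine ⟨part1, ?_, ?_⟩
  · intro h
    set p := octMul x y with hp
    have k0 := h (0, (1 : Quaternion ℂ)) rfl
    have k1 := h (0, (⟨0, 1, 0, 0⟩ : Quaternion ℂ)) rfl
    have k2 := h (0, (⟨0, 0, 1, 0⟩ : Quaternion ℂ)) rfl
    have k3 := h (0, (⟨0, 0, 0, 1⟩ : Quaternion ℂ)) rfl
    have m1 := h ((⟨0, 1, 0, 0⟩ : Quaternion ℂ), 0) rfl
    have m2 := h ((⟨0, 0, 1, 0⟩ : Quaternion ℂ), 0) rfl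
    have m3 := h ((⟨0, 0, 0, 1⟩ : Quaternion ℂ), 0) rfl
    simp [octMul, Quaternion.re_mul, quat_star_mk', quat_re_mul_mk'] at k0 k1 k2 k3 m1 m2 m3
    have hp2 : p.2 = 0 := by
      ext <;> simp_all
    apply part1
    refine ⟨p.1.re, ?_⟩
    apply Prod.ext
    · show p.1 = p.1.re • (1 : Quaternion ℂ)
      rw [← Quaternion.coe_mul_eq_smul, mul_one]
      ext <;> simp_all
    · show p.2 = p.1.re • (0 : Quaternion ℂ)
      rw [smul_zero]; exact hp2
  · intro h z hz
    rw [h]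
    simp [octMul]
end
end

section
/- Cayley-Grassmannian criterion: let 𝕆^ℂ be the complex octonions with bilinear form ⟨u,v⟩ = Re(u * v̄) and imaginary part Im 𝕆^ℂ. Let B be a four-dimensional ℂ-subspace of Im 𝕆^ℂ, and let B^⊥ := {w ∈ 𝕆^ℂ | ⟨w,b⟩ = 0 for all b ∈ B} be its orthogonal complement in 𝕆^ℂ. Then Re((x*y)*z) = 0 for all x, y, z ∈ B (i.e. the associative three-form vanishes identically on B) if and only if B^⊥ is closed under multiplication (u, v ∈ B^⊥ ⟹ u*v ∈ B^⊥), i.e. B^⊥ is a subalgebra of 𝕆^ℂ. -/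
noncomputable section

/-- Octonionic conjugation `(a, b)‾ = (a*, -b)`. -/
def octConj (x : Quaternion ℂ × Quaternion ℂ) : Quaternion ℂ × Quaternion ℂ :=
  (star x.1, -x.2)

/-- The bilinear form `⟨u, v⟩ = Re (u * v̄)` on the complex octonions. -/
def octInner (u v : Quaternion ℂ × Quaternion ℂ) : ℂ :=
  (octMul u (octConj v)).1.re

local notation "𝕆" => (Quaternion ℂ × Quaternion ℂ)

namespace CGaux

attribute [local simp] Quaternion.re_mul Quaternion.imI_mul Quaternion.imJ_mul Quaternion.imK_mul
attribute [local simp] Quaternion.re_zero Quaternion.imI_zero Quaternion.imJ_zero Quaternion.imK_zero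
attribute [local simp] Quaternion.re_one Quaternion.imI_one Quaternion.imJ_one Quaternion.imK_one

lemma octInner_coords (u v : 𝕆) :
    octInner u v = u.1.re*v.1.re + u.1.imI*v.1.imI + u.1.imJ*v.1.imJ + u.1.imK*v.1.imK
      + u.2.re*v.2.re + u.2.imI*v.2.imI + u.2.imJ*v.2.imJ + u.2.imK*v.2.imK := by
  simp only [octInner, octMul, octConj]
  simp
  ring

lemma octInner_symm (u v : 𝕆) : octInner u v = octInner v u := by
  simp only [octInner_coords]; ring

lemma octInner_add_left (u u' v : 𝕆) :
    octInner (u + u') v = octInner u v + octInner u' v := by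
  simp only [octInner_coords, Prod.fst_add, Prod.snd_add, Quaternion.re_add,
    Quaternion.imI_add, Quaternion.imJ_add, Quaternion.imK_add]
  ring

lemma octInner_smul_left (c : ℂ) (u v : 𝕆) :
    octInner (c • u) v = c * octInner u v := by
  simp only [octInner_coords, Prod.smul_fst, Prod.smul_snd, Quaternion.re_smul,
    Quaternion.imI_smul, Quaternion.imJ_smul, Quaternion.imK_smul, smul_eq_mul]
  ring

/-- The bilinear form. -/
def Phi : LinearMap.BilinForm ℂ 𝕆 :=
  LinearMap.mk₂ ℂ octInner octInner_add_left
    (fun c u v => by rw [octInner_smul_left, smul_eq_mul])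
    (fun u v v' => by rw [octInner_symm, octInner_add_left, octInner_symm v u, octInner_symm v' u])
    (fun c u v => by rw [octInner_symm, octInner_smul_left, octInner_symm v u, smul_eq_mul])

@[simp] lemma Phi_apply (u v : 𝕆) : Phi u v = octInner u v := rfl

lemma Phi_isSymm : ∀ u v : 𝕆, Phi u v = Phi v u := octInner_symm

lemma Phi_isRefl : Phi.IsRefl := fun u v h => by
  rw [Phi_apply, octInner_symm] at h; exact h

lemma Phi_nondegenerate : Phi.Nondegenerate := by
  refine (LinearMap.IsRefl.nondegenerate_iff_separatingLeft Phi_isRefl).mpr ?_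
  intro u h
  have h1 := h ((⟨1,0,0,0⟩ : Quaternion ℂ), 0)
  have h2 := h ((⟨0,1,0,0⟩ : Quaternion ℂ), 0)
  have h3 := h ((⟨0,0,1,0⟩ : Quaternion ℂ), 0)
  have h4 := h ((⟨0,0,0,1⟩ : Quaternion ℂ), 0)
  have h5 := h (0, (⟨1,0,0,0⟩ : Quaternion ℂ))
  have h6 := h (0, (⟨0,1,0,0⟩ : Quaternion ℂ))
  have h7 := h (0, (⟨0,0,1,0⟩ : Quaternion ℂ))
  have h8 := h (0, (⟨0,0,0,1⟩ : Quaternion ℂ))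
  simp only [Phi_apply, octInner_coords] at h1 h2 h3 h4 h5 h6 h7 h8
  simp at h1 h2 h3 h4 h5 h6 h7 h8
  ext <;> simp_all

lemma finrank_oct : Module.finrank ℂ 𝕆 = 8 := by
  rw [Module.finrank_prod, Quaternion.finrank_eq_four]

/-- linearized composition identity -/
lemma comp_lin (a p c q : 𝕆) :
    octInner (octMul a p) (octMul c q) + octInner (octMul c p) (octMul a q)
      = 2 * octInner a c * octInner p q := by
  simp only [octInner, octMul, octConj]
  simp
  ring

set_option maxHeartbeats 2000000 in
/-- left alternativity + quadratic relation -/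
lemma left_alt (x c : 𝕆) :
    octMul x (octMul x c) = (2 * x.1.re) • octMul x c - (octInner x x) • c := by
  obtain ⟨xa, xb⟩ := x
  obtain ⟨ca, cb⟩ := c
  simp only [octInner_coords, octMul]
  ext <;>
  · simp
    ring

set_option maxHeartbeats 2000000 in
/-- conj-mult: x̄ (x c) = q(x) c -/
lemma conj_mul_mul (x c : 𝕆) :
    octMul (octConj x) (octMul x c) = (octInner x x) • c := by
  obtain ⟨xa, xb⟩ := x
  obtain ⟨ca, cb⟩ := c
  simp only [octInner_coords, octMul, octConj]
  ext <;>
  · simp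
    ring

/-- <ab, c> = <a, c b̄> -/
lemma inner_mul_right (a b c : 𝕆) :
    octInner (octMul a b) c = octInner a (octMul c (octConj b)) := by
  simp only [octInner, octMul, octConj]
  simp
  ring

lemma octConj_of_im (b : 𝕆) (hb : b.1.re = 0) : octConj b = -b := by
  obtain ⟨b1, b2⟩ := b
  simp only [octConj]
  ext <;> simp_all

lemma octMul_one (u : 𝕆) : octMul u (1, 0) = u := by
  simp [octMul]

lemma octInner_one (u : 𝕆) : octInner u ((1 : Quaternion ℂ), (0 : Quaternion ℂ)) = u.1.re := by
  simp [octInner_coords]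

/-- Re((p)(z)) = -<p, z> when z imaginary -/
lemma re_mul_eq_neg_inner (p z : 𝕆) (hz : z.1.re = 0) :
    (octMul p z).1.re = -octInner p z := by
  obtain ⟨z1, z2⟩ := z
  simp only at hz
  simp only [octInner, octMul, octConj]
  simp [hz]
  all_goals ring

lemma octInner_sub_left (u u' v : 𝕆) :
    octInner (u - u') v = octInner u v - octInner u' v := by
  simp only [octInner_coords, Prod.fst_sub, Prod.snd_sub, Quaternion.re_sub,
    Quaternion.imI_sub, Quaternion.imJ_sub, Quaternion.imK_sub]
  ring

lemma octInner_neg_right (u v : 𝕆) : octInner u (-v) = -octInner u v := by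
  simp only [octInner_coords, Prod.fst_neg, Prod.snd_neg, Quaternion.re_neg,
    Quaternion.imI_neg, Quaternion.imJ_neg, Quaternion.imK_neg]
  ring

/-- conj self-adjoint -/
lemma inner_conj (u v : 𝕆) : octInner (octConj u) v = octInner u (octConj v) := by
  simp only [octInner, octMul, octConj]
  simp

end CGaux

namespace CGaux

open Module

lemma octMul_add_right (x u v : 𝕆) : octMul x (u + v) = octMul x u + octMul x v := by
  simp only [octMul]
  ext <;> simp <;> ring

lemma octMul_smul_right (x : 𝕆) (c : ℂ) (u : 𝕆) : octMul x (c • u) = c • octMul x u := by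
  simp only [octMul]
  ext <;> simp <;> ring

set_option maxHeartbeats 2000000 in
/-- x (x̄ u) = q(x) u -/
lemma mul_conj_mul (x c : 𝕆) :
    octMul x (octMul (octConj x) c) = (octInner x x) • c := by
  obtain ⟨xa, xb⟩ := x
  obtain ⟨ca, cb⟩ := c
  simp only [octInner_coords, octMul, octConj]
  ext <;>
  · simp
    ring

/-- left multiplication as a linear map -/
def lmulL (x : 𝕆) : 𝕆 →ₗ[ℂ] 𝕆 where
  toFun := octMul x
  map_add' := octMul_add_right x
  map_smul' c u := octMul_smul_right x c u

@[simp] lemma lmulL_apply (x u : 𝕆) : lmulL x u = octMul x u := rfl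

/-- left multiplication by an anisotropic vector, as an equivalence -/
def lmulEquiv (x : 𝕆) (hx : octInner x x ≠ 0) : 𝕆 ≃ₗ[ℂ] 𝕆 :=
  LinearEquiv.ofLinear (lmulL x) ((octInner x x)⁻¹ • lmulL (octConj x))
    (by
      apply LinearMap.ext
      intro u
      simp only [LinearMap.comp_apply, LinearMap.smul_apply, lmulL_apply, LinearMap.id_apply,
        octMul_smul_right, mul_conj_mul, smul_smul]
      rw [inv_mul_cancel₀ hx, one_smul])
    (by
      apply LinearMap.ext
      intro u
      simp only [LinearMap.comp_apply, LinearMap.smul_apply, lmulL_apply, LinearMap.id_apply,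
        octMul_smul_right, conj_mul_mul, smul_smul]
      rw [inv_mul_cancel₀ hx, one_smul])

lemma finrank_map_lmul (x : 𝕆) (hx : octInner x x ≠ 0) (W : Submodule ℂ 𝕆) :
    finrank ℂ (W.map (lmulL x)) = finrank ℂ W := by
  have : lmulL x = (lmulEquiv x hx : 𝕆 →ₗ[ℂ] 𝕆) := rfl
  rw [this, LinearEquiv.finrank_map_eq]

lemma octInner_add_right (u v v' : 𝕆) :
    octInner u (v + v') = octInner u v + octInner u v' := by
  rw [octInner_symm, octInner_add_left, octInner_symm v u, octInner_symm v' u]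

/-- there is an anisotropic vector in B -/
lemma exists_aniso (B : Submodule ℂ 𝕆) (hdim : finrank ℂ B = 4)
    (hIm : ∀ b ∈ B, (b : 𝕆).1.re = 0) : ∃ x ∈ B, octInner x x ≠ 0 := by
  by_contra hcon
  push_neg at hcon
  have hpair : ∀ x ∈ B, ∀ y ∈ B, octInner x y = 0 := by
    intro x hx y hy
    have h1 := hcon (x + y) (B.add_mem hx hy)
    have h2 := hcon x hx
    have h3 := hcon y hy
    rw [octInner_add_left, octInner_add_right, octInner_add_right, h2, h3,
      octInner_symm y x] at h1
    have : (2 : ℂ) * octInner x y = 0 := by linear_combination h1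
    have h20 : (2 : ℂ) ≠ 0 := two_ne_zero
    exact (mul_eq_zero.mp this).resolve_left h20
  set one : 𝕆 := ((1 : Quaternion ℂ), (0 : Quaternion ℂ)) with hone
  have hone0 : one ≠ 0 := by
    simp only [hone, ne_eq, Prod.ext_iff]
    intro ⟨h1, _⟩
    exact one_ne_zero h1
  set U : Submodule ℂ 𝕆 := B ⊔ (ℂ ∙ one) with hU
  have hBle : B ≤ Phi.orthogonal U := by
    intro m hm
    rw [LinearMap.BilinForm.mem_orthogonal_iff]
    intro n hn
    obtain ⟨b, hb, z, hz, rfl⟩ := Submodule.mem_sup.mp hn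
    obtain ⟨c, rfl⟩ := Submodule.mem_span_singleton.mp hz
    show Phi (b + c • one) m = 0
    rw [map_add, LinearMap.add_apply, map_smul, LinearMap.smul_apply]
    have e1 : Phi b m = 0 := hpair b hb m hm
    have e2 : Phi one m = 0 := by
      rw [Phi_apply, octInner_symm, octInner_one]
      exact hIm m hm
    rw [e1, e2, smul_zero, add_zero]
  have hinf : B ⊓ (ℂ ∙ one) = ⊥ := by
    rw [eq_bot_iff]
    intro w hw
    obtain ⟨hw1, hw2⟩ := hw
    obtain ⟨c, rfl⟩ := Submodule.mem_span_singleton.mp hw2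
    have : (c • one).1.re = 0 := hIm _ hw1
    simp only [hone, Prod.smul_fst, Quaternion.re_smul, Quaternion.re_one, smul_eq_mul,
      mul_one] at this
    simp [this]
  have hfinU : finrank ℂ U = 5 := by
    have := Submodule.finrank_sup_add_finrank_inf_eq B (ℂ ∙ one)
    rw [hinf, finrank_bot, add_zero, hdim, finrank_span_singleton hone0] at this
    rw [hU]
    omega
  have hOU : finrank ℂ (Phi.orthogonal U) = 3 := by
    rw [LinearMap.BilinForm.finrank_orthogonal Phi_nondegenerate, finrank_oct, hfinU]
  have hle := Submodule.finrank_mono hBle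
  rw [hdim, hOU] at hle
  omega

end CGaux

open CGaux

/-- Cayley-Grassmannian criterion: for a four-dimensional subspace `B` of the imaginary
complex octonions, the associative three-form `(x,y,z) ↦ Re ((x*y)*z)` vanishes
identically on `B` iff `B^⊥` is a subalgebra of `𝕆^ℂ` (closed under multiplication). -/
theorem cayley_grassmannian_criterion
    (B : Submodule ℂ (Quaternion ℂ × Quaternion ℂ))
    (hdim : Module.finrank ℂ B = 4)
    (hIm : ∀ b ∈ B, (b : Quaternion ℂ × Quaternion ℂ).1.re = 0) :
    (∀ x ∈ B, ∀ y ∈ B, ∀ z ∈ B, (octMul (octMul x y) z).1.re = 0) ↔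
    (∀ u v : Quaternion ℂ × Quaternion ℂ,
      (∀ b ∈ B, octInner u b = 0) → (∀ b ∈ B, octInner v b = 0) →
      ∀ b ∈ B, octInner (octMul u v) b = 0) := by
  classical
  set CC := Phi.orthogonal B with hCC
  have hmem : ∀ u : 𝕆, u ∈ CC ↔ ∀ b ∈ B, octInner u b = 0 := by
    intro u
    rw [hCC, LinearMap.BilinForm.mem_orthogonal_iff]
    constructor
    · intro h b hb
      have := h b hb
      rwa [Phi_apply, octInner_symm] at this
    · intro h n hn
      show Phi n u = 0
      rw [Phi_apply, octInner_symm]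
      exact h n hn
  have hfinC : Module.finrank ℂ CC = 4 := by
    rw [hCC, LinearMap.BilinForm.finrank_orthogonal Phi_nondegenerate,
      finrank_oct, hdim]
  constructor
  · -- associative form vanishes on B → B^⊥ closed under multiplication
    intro hT u v hu hv b hb
    have hT' : ∀ p ∈ B, ∀ q ∈ B, ∀ r ∈ B, octInner (octMul p q) r = 0 := by
      intro p hp q hq r hr
      have h1 := hT p hp q hq r hr
      have h2 := re_mul_eq_neg_inner (octMul p q) r (hIm r hr)
      rw [h1] at h2
      linear_combination h2
    obtain ⟨x, hxB, hx⟩ := exists_aniso B hdim hIm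
    have hmaple : B.map (lmulL x) ≤ CC := by
      rintro _ ⟨b1, hb1, rfl⟩
      exact (hmem _).mpr fun b' hb' => hT' x hxB b1 hb1 b' hb'
    have hmapeq : B.map (lmulL x) = CC := by
      apply Submodule.eq_of_le_of_finrank_le hmaple
      rw [hfinC, finrank_map_lmul x hx, hdim]
    have hu' : u ∈ B.map (lmulL x) := by rw [hmapeq]; exact (hmem u).mpr hu
    have hv' : v ∈ B.map (lmulL x) := by rw [hmapeq]; exact (hmem v).mpr hv
    obtain ⟨b1, hb1, rfl⟩ := hu'
    obtain ⟨b2, hb2, rfl⟩ := hv'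
    simp only [lmulL_apply]
    have e1 := comp_lin (octMul x b1) (octMul x b2) b ((1 : Quaternion ℂ), (0 : Quaternion ℂ))
    rw [octMul_one, octMul_one] at e1
    have z1 : octInner (octMul x b1) b = 0 := hT' x hxB b1 hb1 b hb
    have e2 := comp_lin b (octMul x b2) x b1
    have z2 : octInner (octMul x b2) b1 = 0 := hT' x hxB b2 hb2 b1 hb1
    have hx0 : x.1.re = 0 := hIm x hxB
    have la := left_alt x b2
    have z3 : octInner (octMul x (octMul x b2)) (octMul b b1)
        = -(octInner x x) * octInner b2 (octMul b b1) := by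
      rw [la, octInner_sub_left, octInner_smul_left, octInner_smul_left, hx0]
      ring
    have z4 : octInner b2 (octMul b b1) = 0 := by
      rw [octInner_symm]
      exact hT' b hb b1 hb1 b2 hb2
    linear_combination e1 - e2 + z3 +
      2 * octInner (octMul x b2) ((1 : Quaternion ℂ), (0 : Quaternion ℂ)) * z1 -
      2 * octInner b x * z2 - octInner x x * z4
  · -- B^⊥ closed under multiplication → associative form vanishes on B
    intro hS x hxB y hyB z hzB
    have hz0 := hIm z hzB
    rw [re_mul_eq_neg_inner _ z hz0, neg_eq_zero]
    obtain ⟨x0, hx0B, hx0⟩ := exists_aniso B hdim hIm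
    have hx00 : x0.1.re = 0 := hIm x0 hx0B
    have hSC : ∀ u ∈ CC, ∀ v ∈ CC, octMul u v ∈ CC := fun u hu v hv =>
      (hmem _).mpr (hS u v ((hmem u).mp hu) ((hmem v).mp hv))
    have hconj : ∀ u ∈ CC, octConj u ∈ CC := by
      intro u hu
      refine (hmem _).mpr fun b hb => ?_
      rw [inner_conj, octConj_of_im b (hIm b hb), octInner_neg_right,
        (hmem u).mp hu b hb, neg_zero]
    have horth : Phi.orthogonal CC = B := by
      rw [hCC, LinearMap.BilinForm.orthogonal_orthogonal Phi_nondegenerate Phi_isRefl]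
    have hmaple : CC.map (lmulL x0) ≤ B := by
      rintro _ ⟨c, hc, rfl⟩
      rw [← horth, LinearMap.BilinForm.mem_orthogonal_iff]
      intro n hn
      show Phi n (lmulL x0 c) = 0
      rw [Phi_apply, octInner_symm, lmulL_apply, inner_mul_right]
      have h1 : octMul n (octConj c) ∈ CC := hSC n hn _ (hconj c hc)
      rw [octInner_symm]
      exact (hmem _).mp h1 x0 hx0B
    have hmapeq : CC.map (lmulL x0) = B := by
      apply Submodule.eq_of_le_of_finrank_le hmaple
      rw [hdim, finrank_map_lmul x0 hx0, hfinC]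
    have hx' : x ∈ CC.map (lmulL x0) := by rw [hmapeq]; exact hxB
    have hy' : y ∈ CC.map (lmulL x0) := by rw [hmapeq]; exact hyB
    obtain ⟨c1, hc1, rfl⟩ := hx'
    obtain ⟨c2, hc2, rfl⟩ := hy'
    simp only [lmulL_apply] at *
    have hyB' : octMul x0 c2 ∈ B := hyB
    have e1 := comp_lin (octMul x0 c1) (octMul x0 c2) z ((1 : Quaternion ℂ), (0 : Quaternion ℂ))
    rw [octMul_one, octMul_one] at e1
    have s1 : octInner (octMul x0 c2) ((1 : Quaternion ℂ), (0 : Quaternion ℂ)) = 0 := by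
      rw [octInner_one]
      exact hIm _ hyB'
    have e2 := comp_lin z (octMul x0 c2) x0 c1
    have z2 : octInner (octMul x0 c2) c1 = 0 := by
      rw [octInner_symm]
      exact (hmem c1).mp hc1 _ hyB'
    have la := left_alt x0 c2
    have z3 : octInner (octMul x0 (octMul x0 c2)) (octMul z c1)
        = -(octInner x0 x0) * octInner c2 (octMul z c1) := by
      rw [la, octInner_sub_left, octInner_smul_left, octInner_smul_left, hx00]
      ring
    have z4 : octInner c2 (octMul z c1) = 0 := by
      rw [octInner_symm c2 (octMul z c1), inner_mul_right,
        octInner_symm]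
      have h1 : octMul c2 (octConj c1) ∈ CC := hSC c2 hc2 _ (hconj c1 hc1)
      exact (hmem _).mp h1 z hzB
    linear_combination e1 - e2 + z3 + 2 * s1 * octInner (octMul x0 c1) z -
      2 * octInner z x0 * z2 - octInner x0 x0 * z4
end
end
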